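/- There exists a universal constant C > 0 with the following property. For every integer d ≥ 1, every probability density p₀ on ℝ^d, every R > 0 with ∫_{‖x‖₂ < R} p₀(x) dx > 1/2, every t ∈ (0,1), and every y ∈ ℝ^d, the score of the smoothed density satisfies ‖∇ log q_t(y)‖₂ ≤ C·( (‖y‖₂ + √t·R)/(1−t) + d/√(1−t) ). -/

import Mathlib

open MeasureTheory Real

/-- The Gaussian kernel `G_t(y,x) = (2π(1−t))^{−d/2} exp(−‖y−√t·x‖²/(2(1−t)))`. -/
noncomputable def gaussKernel (d : ℕ) (t : ℝ) (y x : EuclideanSpace ℝ (Fin d)) : ℝ :=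
  (2 * π * (1 - t)) ^ (-(d : ℝ) / 2) *
    Real.exp (-‖y - Real.sqrt t • x‖ ^ 2 / (2 * (1 - t)))

/-- The smoothed density `q_t(y) = ∫ p₀(x) G_t(y,x) dx`. -/
noncomputable def smoothed (d : ℕ) (p₀ : EuclideanSpace ℝ (Fin d) → ℝ) (t : ℝ)
    (y : EuclideanSpace ℝ (Fin d)) : ℝ :=
  ∫ x, p₀ x * gaussKernel d t y x

/-- The posterior density `π_t(x|y) = p₀(x) G_t(y,x)/q_t(y)`. -/
noncomputable def post (d : ℕ) (p₀ : EuclideanSpace ℝ (Fin d) → ℝ) (t : ℝ)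
    (x y : EuclideanSpace ℝ (Fin d)) : ℝ :=
  p₀ x * gaussKernel d t y x / smoothed d p₀ t y

/-- The conditional reward `ρ_t(y) = ∫ r(x) π_t(x|y) dx`. -/
noncomputable def condReward (d : ℕ) (p₀ r : EuclideanSpace ℝ (Fin d) → ℝ) (t : ℝ)
    (y : EuclideanSpace ℝ (Fin d)) : ℝ :=
  ∫ x, r x * post d p₀ t x y

/-- The reward-reweighted density `p₀^r(x) = r(x)p₀(x)/∫ r p₀`. -/
noncomputable def reweighted (d : ℕ) (p₀ r : EuclideanSpace ℝ (Fin d) → ℝ)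
    (x : EuclideanSpace ℝ (Fin d)) : ℝ :=
  r x * p₀ x / ∫ x', r x' * p₀ x'

/-- A probability density on `ℝ^d`: measurable, nonnegative, integrating to one. -/
def IsDensity {d : ℕ} (p : EuclideanSpace ℝ (Fin d) → ℝ) : Prop :=
  Measurable p ∧ (∀ x, 0 ≤ p x) ∧ ∫ x, p x = 1

/-! Auxiliary lemmas -/

lemma aux_sup (σ2 r : ℝ) (hσ : 0 < σ2) (h0 : 0 ≤ r) :
    r * exp (-r ^ 2 / (2 * σ2)) ≤ Real.sqrt σ2 := by
  have hs : 0 < Real.sqrt σ2 := Real.sqrt_pos.2 hσ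
  have hss : Real.sqrt σ2 ^ 2 = σ2 := Real.sq_sqrt hσ.le
  have h1 : r ≤ Real.sqrt σ2 * exp (r ^ 2 / (2 * σ2)) := by
    have h2 := add_one_le_exp (r ^ 2 / (2 * σ2))
    have h3 : Real.sqrt σ2 * (r ^ 2 / (2 * σ2) + 1) ≤ Real.sqrt σ2 * exp (r ^ 2 / (2 * σ2)) :=
      mul_le_mul_of_nonneg_left h2 hs.le
    refine le_trans ?_ h3
    rw [mul_add, mul_one, ← sub_le_iff_le_add, ← mul_div_assoc, le_div_iff₀ (by positivity)]
    nlinarith [sq_nonneg (r - Real.sqrt σ2)]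
  have h4 := mul_le_mul_of_nonneg_right h1 (Real.exp_pos (-r ^ 2 / (2 * σ2))).le
  calc r * exp (-r ^ 2 / (2 * σ2))
      ≤ Real.sqrt σ2 * exp (r ^ 2 / (2 * σ2)) * exp (-r ^ 2 / (2 * σ2)) := h4
    _ = Real.sqrt σ2 := by rw [mul_assoc, ← Real.exp_add]; ring_nf; simp

lemma aux_mono (σ2 M r : ℝ) (hσ : 0 < σ2) (hM2 : 2 * σ2 ≤ M ^ 2) (hM : 0 < M) (hMr : M ≤ r) :
    r * exp (-r ^ 2 / (2 * σ2)) ≤ M * exp (-M ^ 2 / (2 * σ2)) := by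
  have h1 : r ≤ M * exp ((r ^ 2 - M ^ 2) / (2 * σ2)) := by
    have h2 := add_one_le_exp ((r ^ 2 - M ^ 2) / (2 * σ2))
    have h3 : M * ((r ^ 2 - M ^ 2) / (2 * σ2) + 1) ≤ M * exp ((r ^ 2 - M ^ 2) / (2 * σ2)) :=
      mul_le_mul_of_nonneg_left h2 hM.le
    refine le_trans ?_ h3
    rw [mul_add, mul_one, ← sub_le_iff_le_add, ← mul_div_assoc, le_div_iff₀ (by positivity)]
    nlinarith [mul_nonneg (sub_nonneg.2 hMr)
      (sub_nonneg.2 (le_trans hM2 (by nlinarith : M ^ 2 ≤ M * (r + M))))]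
  have h4 := mul_le_mul_of_nonneg_right h1 (Real.exp_pos (-r ^ 2 / (2 * σ2))).le
  refine h4.trans_eq ?_
  rw [mul_assoc, ← Real.exp_add]
  congr 2
  field_simp; ring

/-! Pointwise derivative of the Gaussian kernel. -/

lemma hasFDerivAt_gaussKernel (d : ℕ) (t : ℝ) (ht : (1 : ℝ) - t ≠ 0)
    (x z : EuclideanSpace ℝ (Fin d)) :
    HasFDerivAt (fun z => gaussKernel d t z x)
      ((gaussKernel d t z x * (-(1 - t)⁻¹)) • innerSL ℝ (z - Real.sqrt t • x)) z := by
  set a := Real.sqrt t • x with ha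
  set c : ℝ := (2 * π * (1 - t)) ^ (-(d : ℝ) / 2) with hc
  have h1 : HasFDerivAt (fun z : EuclideanSpace ℝ (Fin d) => z - a)
      (ContinuousLinearMap.id ℝ _) z := (hasFDerivAt_id z).sub_const a
  have h2 := h1.norm_sq
  have hφ : HasDerivAt (fun u : ℝ => c * Real.exp (-u / (2 * (1 - t))))
      (c * Real.exp (-‖z - a‖ ^ 2 / (2 * (1 - t))) * (-1 / (2 * (1 - t)))) (‖z - a‖ ^ 2) := by
    have hb : HasDerivAt (fun u : ℝ => -u / (2 * (1 - t))) (-1 / (2 * (1 - t)))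
        (‖z - a‖ ^ 2) := ((hasDerivAt_id (‖z - a‖ ^ 2)).neg).div_const (2 * (1 - t))
    have := hb.exp.const_mul c
    exact this.congr_deriv (by ring)
  have h3 := hφ.comp_hasFDerivAt z h2
  refine h3.congr_fderiv ?_
  ext u
  simp only [gaussKernel, ← hc, ← ha, ContinuousLinearMap.smul_apply,
    ContinuousLinearMap.comp_id, ContinuousLinearMap.coe_smul', Pi.smul_apply,
    smul_eq_mul, nsmul_eq_mul, Nat.cast_ofNat, innerSL_apply_apply, Function.comp]
  field_simp

/-! Basic facts about the Gaussian kernel. -/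

lemma gaussKernel_pos (d : ℕ) (t : ℝ) (ht : t < 1) (y x : EuclideanSpace ℝ (Fin d)) :
    0 < gaussKernel d t y x := by
  have h1 : (0 : ℝ) < 1 - t := sub_pos.2 ht
  have : (0 : ℝ) < 2 * π * (1 - t) := by positivity
  unfold gaussKernel
  positivity

lemma gaussKernel_le (d : ℕ) (t : ℝ) (ht : t < 1) (y x : EuclideanSpace ℝ (Fin d)) :
    gaussKernel d t y x ≤ (2 * π * (1 - t)) ^ (-(d : ℝ) / 2) := by
  have h1 : (0 : ℝ) < 1 - t := sub_pos.2 ht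
  have hc : (0 : ℝ) < (2 * π * (1 - t)) ^ (-(d : ℝ) / 2) := by positivity
  unfold gaussKernel
  have : Real.exp (-‖y - Real.sqrt t • x‖ ^ 2 / (2 * (1 - t))) ≤ 1 := by
    apply Real.exp_le_one_iff.2
    apply div_nonpos_of_nonpos_of_nonneg
    · simp [sq_nonneg]
    · positivity
  nlinarith

lemma continuous_gaussKernel (d : ℕ) (t : ℝ) (y : EuclideanSpace ℝ (Fin d)) :
    Continuous (fun x => gaussKernel d t y x) := by
  unfold gaussKernel
  fun_prop

/-! The gradient of `log ∘ smoothed`. -/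

lemma hasGradientAt_smoothed (d : ℕ) (p₀ : EuclideanSpace ℝ (Fin d) → ℝ) (t : ℝ)
    (ht : t ∈ Set.Ioo (0 : ℝ) 1) (hp : IsDensity p₀) (y : EuclideanSpace ℝ (Fin d)) :
    HasGradientAt (smoothed d p₀ t)
      (∫ x, (p₀ x * gaussKernel d t y x * (-(1 - t)⁻¹)) • (y - Real.sqrt t • x)) y := by
  obtain ⟨hmeas, hnonneg, hint1⟩ := hp
  have hσ : (0 : ℝ) < 1 - t := sub_pos.2 ht.2
  have hσ' : (1 : ℝ) - t ≠ 0 := hσ.ne'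
  set c : ℝ := (2 * π * (1 - t)) ^ (-(d : ℝ) / 2) with hc
  have hc0 : 0 < c := by rw [hc]; positivity
  have hp_int : Integrable p₀ := integrable_of_integral_eq_one hint1
  set F : EuclideanSpace ℝ (Fin d) → EuclideanSpace ℝ (Fin d) → ℝ :=
    fun z x => p₀ x * gaussKernel d t z x with hF
  set w : EuclideanSpace ℝ (Fin d) → EuclideanSpace ℝ (Fin d) → EuclideanSpace ℝ (Fin d) :=
    fun z x => (p₀ x * gaussKernel d t z x * (-(1 - t)⁻¹)) • (z - Real.sqrt t • x) with hw
  set F' : EuclideanSpace ℝ (Fin d) → EuclideanSpace ℝ (Fin d) →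
      (EuclideanSpace ℝ (Fin d) →L[ℝ] ℝ) :=
    fun z x => innerSL ℝ (w z x) with hF'
  -- norm of w and F'
  have hnw : ∀ z x, ‖w z x‖ =
      p₀ x * gaussKernel d t z x * (1 - t)⁻¹ * ‖z - Real.sqrt t • x‖ := by
    intro z x
    simp only [hw]
    rw [norm_smul, Real.norm_eq_abs, abs_mul, abs_mul]
    rw [abs_of_nonneg (hnonneg x), abs_of_nonneg (gaussKernel_pos d t ht.2 z x).le,
      abs_neg, abs_of_nonneg (by positivity : (0:ℝ) ≤ (1-t)⁻¹)]
  have hnF' : ∀ z x, ‖F' z x‖ =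
      p₀ x * gaussKernel d t z x * (1 - t)⁻¹ * ‖z - Real.sqrt t • x‖ := by
    intro z x
    simp only [hF']
    rw [innerSL_apply_norm]
    exact hnw z x
  -- key uniform bound
  have hkey : ∀ z x, p₀ x * gaussKernel d t z x * (1 - t)⁻¹ * ‖z - Real.sqrt t • x‖ ≤
      p₀ x * (c * (1 - t)⁻¹ * Real.sqrt (1 - t)) := by
    intro z x
    have h1 : gaussKernel d t z x * ‖z - Real.sqrt t • x‖ ≤ c * Real.sqrt (1 - t) := by
      have h2 := aux_sup (1 - t) (‖z - Real.sqrt t • x‖) hσ (norm_nonneg _)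
      unfold gaussKernel
      rw [← hc, mul_assoc, mul_comm (Real.exp _)]
      exact mul_le_mul_of_nonneg_left h2 hc0.le
    calc p₀ x * gaussKernel d t z x * (1 - t)⁻¹ * ‖z - Real.sqrt t • x‖
        = (p₀ x * (1 - t)⁻¹) * (gaussKernel d t z x * ‖z - Real.sqrt t • x‖) := by ring
      _ ≤ (p₀ x * (1 - t)⁻¹) * (c * Real.sqrt (1 - t)) :=
          mul_le_mul_of_nonneg_left h1 (mul_nonneg (hnonneg x) (by positivity))
      _ = p₀ x * (c * (1 - t)⁻¹ * Real.sqrt (1 - t)) := by ring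
  -- measurability
  have hFm : ∀ z, AEStronglyMeasurable (F z) volume := fun z =>
    (hmeas.mul (continuous_gaussKernel d t z).measurable).aestronglyMeasurable
  have hwm : AEStronglyMeasurable (w y) volume := by
    apply AEStronglyMeasurable.fun_smul
    · exact ((hmeas.mul (continuous_gaussKernel d t y).measurable).mul_const
        _).aestronglyMeasurable
    · exact (continuous_const.fun_sub (continuous_const.fun_smul continuous_id)).aestronglyMeasurable
  have hF'm : AEStronglyMeasurable (F' y) volume := by
    simp only [hF']
    exact (innerSL ℝ).continuous.comp_aestronglyMeasurable hwm
  -- integrability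
  have hbound_int : Integrable (fun x => p₀ x * (c * (1 - t)⁻¹ * Real.sqrt (1 - t))) volume :=
    hp_int.mul_const _
  have hF_int : Integrable (F y) volume := by
    refine (hp_int.const_mul c).mono' (hFm y) (Filter.Eventually.of_forall fun x => ?_)
    simp only [hF]
    rw [Real.norm_eq_abs,
      abs_of_nonneg (mul_nonneg (hnonneg x) (gaussKernel_pos d t ht.2 y x).le)]
    calc p₀ x * gaussKernel d t y x ≤ p₀ x * c :=
          mul_le_mul_of_nonneg_left (gaussKernel_le d t ht.2 y x) (hnonneg x)
      _ = c * p₀ x := mul_comm _ _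
  have hw_int : Integrable (w y) volume := by
    refine hbound_int.mono' hwm (Filter.Eventually.of_forall fun x => ?_)
    rw [hnw y x]
    exact hkey y x
  -- differentiation under the integral sign
  have hderiv : HasFDerivAt (fun z => ∫ x, F z x) (∫ x, F' y x) y := by
    apply hasFDerivAt_integral_of_dominated_of_fderiv_le (s := Set.univ) (hs := Filter.univ_mem)
      (bound := fun x => p₀ x * (c * (1 - t)⁻¹ * Real.sqrt (1 - t)))
    · exact Filter.Eventually.of_forall hFm
    · exact hF_int
    · exact hF'm
    · refine Filter.Eventually.of_forall fun x z _ => ?_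
      rw [hnF' z x]
      exact hkey z x
    · exact hbound_int
    · refine Filter.Eventually.of_forall fun x z _ => ?_
      have h := (hasFDerivAt_gaussKernel d t hσ' x z).const_mul (p₀ x)
      have heq : F' z x = p₀ x • ((gaussKernel d t z x * (-(1 - t)⁻¹)) •
          innerSL ℝ (z - Real.sqrt t • x)) := by
        simp only [hF', hw, _root_.map_smul, smul_smul]
        congr 1
        ring
      rw [heq]
      exact h
  -- rewrite the derivative as an inner product with the vector integral
  have hint_eq : (∫ x, F' y x) = innerSL ℝ (∫ x, w y x) := by
    simp only [hF']
    exact ContinuousLinearMap.integral_comp_comm _ hw_int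
  have heq : (InnerProductSpace.toDual ℝ (EuclideanSpace ℝ (Fin d))) (∫ x, w y x) =
      innerSL ℝ (∫ x, w y x) := by
    ext u; simp [InnerProductSpace.toDual_apply_apply]
  have hsm : smoothed d p₀ t = fun z => ∫ x, F z x := rfl
  have hgoal : HasGradientAt (smoothed d p₀ t) (∫ x, w y x) y := by
    rw [hasGradientAt_iff_hasFDerivAt, heq, ← hint_eq, hsm]
    exact hderiv
  exact hgoal

set_option maxHeartbeats 2000000 in
set_option synthInstance.maxHeartbeats 400000 in
/-- Universal score-norm bound: there is a universal constant `C > 0` such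
that `‖∇ log q_t(y)‖ ≤ C·((‖y‖+√t·R)/(1−t) + d/√(1−t))` whenever `∫_{‖x‖<R} p₀ > 1/2`. -/
theorem stmt_8 :
    ∃ C : ℝ, 0 < C ∧
      ∀ (d : ℕ), 1 ≤ d →
      ∀ p₀ : EuclideanSpace ℝ (Fin d) → ℝ, IsDensity p₀ →
      ∀ R : ℝ, 0 < R →
        (1 / 2 < ∫ x in {x : EuclideanSpace ℝ (Fin d) | ‖x‖ < R}, p₀ x) →
      ∀ t : ℝ, t ∈ Set.Ioo (0 : ℝ) 1 →
      ∀ y : EuclideanSpace ℝ (Fin d),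
        ‖gradient (fun z => Real.log (smoothed d p₀ t z)) y‖ ≤
          C * ((‖y‖ + Real.sqrt t * R) / (1 - t) + d / Real.sqrt (1 - t)) := by
  refine ⟨6, by norm_num, ?_⟩
  intro d hd p₀ hp R hR hmass t ht y
  obtain ⟨hmeas, hnonneg, hint1⟩ := hp
  have hσ : (0 : ℝ) < 1 - t := sub_pos.2 ht.2
  have hs0 : 0 < Real.sqrt t := Real.sqrt_pos.2 ht.1
  set c : ℝ := (2 * π * (1 - t)) ^ (-(d : ℝ) / 2) with hc
  have hc0 : 0 < c := by rw [hc]; positivity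
  set A : ℝ := ‖y‖ + Real.sqrt t * R with hA
  have hA0 : 0 ≤ A := by positivity
  set ey : ℝ := c * Real.exp (-A ^ 2 / (2 * (1 - t))) with hey
  have hey0 : 0 < ey := by rw [hey]; positivity
  have hp_int : Integrable p₀ := integrable_of_integral_eq_one hint1
  have hpG_meas : AEStronglyMeasurable (fun x => p₀ x * gaussKernel d t y x) volume :=
    (hmeas.mul (continuous_gaussKernel d t y).measurable).aestronglyMeasurable
  have hpG_nonneg : ∀ x, 0 ≤ p₀ x * gaussKernel d t y x := fun x =>
    mul_nonneg (hnonneg x) (gaussKernel_pos d t ht.2 y x).le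
  have hpG_int : Integrable (fun x => p₀ x * gaussKernel d t y x) := by
    refine (hp_int.const_mul c).mono' hpG_meas (Filter.Eventually.of_forall fun x => ?_)
    rw [Real.norm_eq_abs, abs_of_nonneg (hpG_nonneg x)]
    calc p₀ x * gaussKernel d t y x ≤ p₀ x * c :=
          mul_le_mul_of_nonneg_left (gaussKernel_le d t ht.2 y x) (hnonneg x)
      _ = c * p₀ x := mul_comm _ _
  -- lower bound on the smoothed density
  set S : Set (EuclideanSpace ℝ (Fin d)) := {x | ‖x‖ < R} with hSdef
  have hS : MeasurableSet S := (isOpen_lt continuous_norm continuous_const).measurableSet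
  have hGx : ∀ x ∈ S, ey ≤ gaussKernel d t y x := by
    intro x hx
    have hr : ‖y - Real.sqrt t • x‖ ≤ A := by
      calc ‖y - Real.sqrt t • x‖ ≤ ‖y‖ + ‖Real.sqrt t • x‖ := norm_sub_le _ _
        _ = ‖y‖ + Real.sqrt t * ‖x‖ := by
            rw [norm_smul, Real.norm_eq_abs, abs_of_nonneg hs0.le]
        _ ≤ ‖y‖ + Real.sqrt t * R := by
            have : ‖x‖ ≤ R := le_of_lt hx
            nlinarith
    rw [hey]
    unfold gaussKernel
    rw [← hc]
    apply mul_le_mul_of_nonneg_left _ hc0.le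
    apply Real.exp_le_exp.2
    apply (div_le_div_iff_of_pos_right (by positivity)).2
    apply neg_le_neg
    exact pow_le_pow_left₀ (norm_nonneg _) hr 2
  have hq_lb : ey / 2 < smoothed d p₀ t y := by
    have h1 : ∫ x in S, ey * p₀ x ≤ ∫ x in S, p₀ x * gaussKernel d t y x := by
      refine setIntegral_mono_on ((hp_int.const_mul ey).integrableOn)
        (hpG_int.integrableOn) hS fun x hx => ?_
      rw [mul_comm]
      exact mul_le_mul_of_nonneg_left (hGx x hx) (hnonneg x)
    have h2 : ∫ x in S, ey * p₀ x = ey * ∫ x in S, p₀ x := integral_const_mul ey _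
    have h3 : ∫ x in S, p₀ x * gaussKernel d t y x ≤ smoothed d p₀ t y :=
      setIntegral_le_integral hpG_int (Filter.Eventually.of_forall hpG_nonneg)
    have h4 : ey / 2 < ey * ∫ x in S, p₀ x := by
      have := mul_lt_mul_of_pos_left hmass hey0
      calc ey / 2 = ey * (1 / 2) := by ring
        _ < ey * ∫ x in S, p₀ x := this
    calc ey / 2 < ey * ∫ x in S, p₀ x := h4
      _ = ∫ x in S, ey * p₀ x := h2.symm
      _ ≤ ∫ x in S, p₀ x * gaussKernel d t y x := h1
      _ ≤ smoothed d p₀ t y := h3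
  have hq0 : 0 < smoothed d p₀ t y := lt_trans (by positivity) hq_lb
  -- gradient formula
  set w : EuclideanSpace ℝ (Fin d) → EuclideanSpace ℝ (Fin d) :=
    fun x => (p₀ x * gaussKernel d t y x * (-(1 - t)⁻¹)) • (y - Real.sqrt t • x) with hwdef
  have hgradq : HasGradientAt (smoothed d p₀ t) (∫ x, w x) y :=
    hasGradientAt_smoothed d p₀ t ht ⟨hmeas, hnonneg, hint1⟩ y
  have hlog : HasGradientAt (fun z => Real.log (smoothed d p₀ t z))
      ((smoothed d p₀ t y)⁻¹ • ∫ x, w x) y := by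
    have h1 := hgradq.hasFDerivAt
    have h2 := h1.log hq0.ne'
    rw [hasGradientAt_iff_hasFDerivAt]
    refine h2.congr_fderiv ?_
    ext u
    simp [InnerProductSpace.toDual_apply_apply, real_inner_smul_left]
  rw [hlog.gradient]
  -- bound the norm of the vector integral
  have hnw : ∀ x, ‖w x‖ =
      p₀ x * gaussKernel d t y x * (1 - t)⁻¹ * ‖y - Real.sqrt t • x‖ := by
    intro x
    simp only [hwdef]
    rw [norm_smul, Real.norm_eq_abs, abs_mul, abs_mul]
    rw [abs_of_nonneg (hnonneg x), abs_of_nonneg (gaussKernel_pos d t ht.2 y x).le,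
      abs_neg, abs_of_nonneg (by positivity : (0:ℝ) ≤ (1-t)⁻¹)]
  have hwm : AEStronglyMeasurable w volume := by
    apply AEStronglyMeasurable.fun_smul
    · exact ((hmeas.mul (continuous_gaussKernel d t y).measurable).mul_const
        _).aestronglyMeasurable
    · exact (continuous_const.fun_sub (continuous_const.fun_smul continuous_id)).aestronglyMeasurable
  have hkey : ∀ x, p₀ x * gaussKernel d t y x * (1 - t)⁻¹ * ‖y - Real.sqrt t • x‖ ≤
      p₀ x * (c * (1 - t)⁻¹ * Real.sqrt (1 - t)) := by
    intro x
    have h1 : gaussKernel d t y x * ‖y - Real.sqrt t • x‖ ≤ c * Real.sqrt (1 - t) := by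
      have h2 := aux_sup (1 - t) (‖y - Real.sqrt t • x‖) hσ (norm_nonneg _)
      unfold gaussKernel
      rw [← hc, mul_assoc, mul_comm (Real.exp _)]
      exact mul_le_mul_of_nonneg_left h2 hc0.le
    calc p₀ x * gaussKernel d t y x * (1 - t)⁻¹ * ‖y - Real.sqrt t • x‖
        = (p₀ x * (1 - t)⁻¹) * (gaussKernel d t y x * ‖y - Real.sqrt t • x‖) := by ring
      _ ≤ (p₀ x * (1 - t)⁻¹) * (c * Real.sqrt (1 - t)) :=
          mul_le_mul_of_nonneg_left h1 (mul_nonneg (hnonneg x) (by positivity))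
      _ = p₀ x * (c * (1 - t)⁻¹ * Real.sqrt (1 - t)) := by ring
  have hw_int : Integrable w := by
    refine (hp_int.mul_const (c * (1 - t)⁻¹ * Real.sqrt (1 - t))).mono' hwm
      (Filter.Eventually.of_forall fun x => ?_)
    rw [hnw x]
    exact hkey x
  -- split the integral of ‖w‖
  set M : ℝ := Real.sqrt (A ^ 2 + 2 * (1 - t)) with hMdef
  have hM0 : 0 < M := Real.sqrt_pos.2 (by positivity)
  have hM2 : M ^ 2 = A ^ 2 + 2 * (1 - t) := Real.sq_sqrt (by positivity)
  set T : Set (EuclideanSpace ℝ (Fin d)) := {x | ‖y - Real.sqrt t • x‖ ≤ M} with hTdef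
  have hT : MeasurableSet T := (isClosed_le
    ((continuous_const.fun_sub (continuous_const.fun_smul continuous_id)).norm)
    continuous_const).measurableSet
  have hsplit : ∫ x, ‖w x‖ = (∫ x in T, ‖w x‖) + ∫ x in Tᶜ, ‖w x‖ :=
    (integral_add_compl hT hw_int.norm).symm
  have hqle : ∫ x in T, p₀ x * gaussKernel d t y x ≤ smoothed d p₀ t y :=
    setIntegral_le_integral hpG_int (Filter.Eventually.of_forall hpG_nonneg)
  have hboundT : ∫ x in T, ‖w x‖ ≤ M * (1 - t)⁻¹ * smoothed d p₀ t y := by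
    have h1 : ∫ x in T, ‖w x‖ ≤ ∫ x in T, M * (1 - t)⁻¹ * (p₀ x * gaussKernel d t y x) := by
      refine setIntegral_mono_on (hw_int.norm.integrableOn)
        ((hpG_int.const_mul _).integrableOn) hT fun x hx => ?_
      rw [hnw x]
      have hxT : ‖y - Real.sqrt t • x‖ ≤ M := hx
      calc p₀ x * gaussKernel d t y x * (1 - t)⁻¹ * ‖y - Real.sqrt t • x‖
          ≤ p₀ x * gaussKernel d t y x * (1 - t)⁻¹ * M :=
            mul_le_mul_of_nonneg_left hxT (mul_nonneg (hpG_nonneg x) (by positivity))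
        _ = M * (1 - t)⁻¹ * (p₀ x * gaussKernel d t y x) := by ring
    have h2 : ∫ x in T, M * (1 - t)⁻¹ * (p₀ x * gaussKernel d t y x)
        = M * (1 - t)⁻¹ * ∫ x in T, p₀ x * gaussKernel d t y x := integral_const_mul _ _
    calc ∫ x in T, ‖w x‖ ≤ M * (1 - t)⁻¹ * ∫ x in T, p₀ x * gaussKernel d t y x := by
          rw [← h2]; exact h1
      _ ≤ M * (1 - t)⁻¹ * smoothed d p₀ t y := by
          exact mul_le_mul_of_nonneg_left hqle (by positivity)
  have hboundTc : ∫ x in Tᶜ, ‖w x‖ ≤ M * (1 - t)⁻¹ * ey := by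
    have hpt : ∀ x ∈ Tᶜ, ‖w x‖ ≤ p₀ x * ((1 - t)⁻¹ * M * ey) := by
      intro x hx
      have hxT : M ≤ ‖y - Real.sqrt t • x‖ := le_of_not_ge hx
      have h1 : ‖y - Real.sqrt t • x‖ * Real.exp (-‖y - Real.sqrt t • x‖ ^ 2 / (2 * (1 - t)))
          ≤ M * Real.exp (-M ^ 2 / (2 * (1 - t))) :=
        aux_mono (1 - t) M _ hσ (by nlinarith) hM0 hxT
      have h2 : Real.exp (-M ^ 2 / (2 * (1 - t))) ≤ Real.exp (-A ^ 2 / (2 * (1 - t))) := by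
        apply Real.exp_le_exp.2
        apply (div_le_div_iff_of_pos_right (by positivity)).2
        nlinarith
      rw [hnw x]
      unfold gaussKernel
      rw [← hc]
      calc p₀ x * (c * Real.exp (-‖y - Real.sqrt t • x‖ ^ 2 / (2 * (1 - t)))) * (1 - t)⁻¹ *
            ‖y - Real.sqrt t • x‖
          = (p₀ x * (1 - t)⁻¹ * c) * (‖y - Real.sqrt t • x‖ *
              Real.exp (-‖y - Real.sqrt t • x‖ ^ 2 / (2 * (1 - t)))) := by ring
        _ ≤ (p₀ x * (1 - t)⁻¹ * c) * (M * Real.exp (-M ^ 2 / (2 * (1 - t)))) := by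
            refine mul_le_mul_of_nonneg_left h1 ?_
            exact mul_nonneg (mul_nonneg (hnonneg x) (by positivity)) hc0.le
        _ ≤ (p₀ x * (1 - t)⁻¹ * c) * (M * Real.exp (-A ^ 2 / (2 * (1 - t)))) := by
            refine mul_le_mul_of_nonneg_left ?_
              (mul_nonneg (mul_nonneg (hnonneg x) (by positivity)) hc0.le)
            exact mul_le_mul_of_nonneg_left h2 hM0.le
        _ = p₀ x * ((1 - t)⁻¹ * M * ey) := by rw [hey]; ring
    have h3 : ∫ x in Tᶜ, ‖w x‖ ≤ ∫ x in Tᶜ, p₀ x * ((1 - t)⁻¹ * M * ey) :=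
      setIntegral_mono_on (hw_int.norm.integrableOn)
        ((hp_int.mul_const _).integrableOn) hT.compl hpt
    have h4 : ∫ x in Tᶜ, p₀ x * ((1 - t)⁻¹ * M * ey)
        = (∫ x in Tᶜ, p₀ x) * ((1 - t)⁻¹ * M * ey) := integral_mul_const _ _
    have h5 : ∫ x in Tᶜ, p₀ x ≤ 1 := by
      rw [← hint1]
      exact setIntegral_le_integral hp_int (Filter.Eventually.of_forall hnonneg)
    calc ∫ x in Tᶜ, ‖w x‖ ≤ (∫ x in Tᶜ, p₀ x) * ((1 - t)⁻¹ * M * ey) := by rw [← h4]; exact h3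
      _ ≤ 1 * ((1 - t)⁻¹ * M * ey) := by
          refine mul_le_mul_of_nonneg_right h5 ?_
          positivity
      _ = M * (1 - t)⁻¹ * ey := by ring
  -- put everything together
  have hvnorm : ‖∫ x, w x‖ ≤ 3 * M * (1 - t)⁻¹ * smoothed d p₀ t y := by
    have h0 := norm_integral_le_integral_norm (μ := volume) w
    have hey2 : ey ≤ 2 * smoothed d p₀ t y := by linarith
    calc ‖∫ x, w x‖ ≤ ∫ x, ‖w x‖ := h0
      _ = (∫ x in T, ‖w x‖) + ∫ x in Tᶜ, ‖w x‖ := hsplit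
      _ ≤ M * (1 - t)⁻¹ * smoothed d p₀ t y + M * (1 - t)⁻¹ * ey := add_le_add hboundT hboundTc
      _ ≤ M * (1 - t)⁻¹ * smoothed d p₀ t y + M * (1 - t)⁻¹ * (2 * smoothed d p₀ t y) := by
          refine add_le_add_right (mul_le_mul_of_nonneg_left hey2 (by positivity)) _
      _ = 3 * M * (1 - t)⁻¹ * smoothed d p₀ t y := by ring
  have hfinal : ‖(smoothed d p₀ t y)⁻¹ • ∫ x, w x‖ ≤ 3 * M * (1 - t)⁻¹ := by
    rw [norm_smul, Real.norm_eq_abs, abs_of_nonneg (inv_nonneg.2 hq0.le)]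
    calc (smoothed d p₀ t y)⁻¹ * ‖∫ x, w x‖
        ≤ (smoothed d p₀ t y)⁻¹ * (3 * M * (1 - t)⁻¹ * smoothed d p₀ t y) :=
          mul_le_mul_of_nonneg_left hvnorm (inv_nonneg.2 hq0.le)
      _ = 3 * M * (1 - t)⁻¹ := by field_simp
  refine hfinal.trans ?_
  -- final arithmetic
  set u : ℝ := Real.sqrt (1 - t) with hu
  have hu0 : 0 < u := Real.sqrt_pos.2 hσ
  have hu2 : u * u = 1 - t := Real.mul_self_sqrt hσ.le
  have hMle : M ≤ A + 2 * u := by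
    have h1 : A ^ 2 + 2 * (1 - t) ≤ (A + 2 * u) ^ 2 := by nlinarith [hu2, hu0, hA0]
    calc M = Real.sqrt (A ^ 2 + 2 * (1 - t)) := hMdef
      _ ≤ Real.sqrt ((A + 2 * u) ^ 2) := Real.sqrt_le_sqrt h1
      _ = A + 2 * u := Real.sqrt_sq (by positivity)
  have hd1 : (1 : ℝ) ≤ (d : ℝ) := by exact_mod_cast hd
  have h6u : 6 * u * (1 - t)⁻¹ = 6 / u := by
    rw [← hu2]
    field_simp
  have hAdiv : 0 ≤ A / (1 - t) := by positivity
  have hdu : 6 / u ≤ 6 * ((d : ℝ) / u) := by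
    rw [div_le_iff₀ hu0] at *
    calc (6 : ℝ) ≤ 6 * (d : ℝ) := by linarith
      _ = 6 * ((d:ℝ) / u) * u := by field_simp
  calc 3 * M * (1 - t)⁻¹ ≤ 3 * (A + 2 * u) * (1 - t)⁻¹ := by
        refine mul_le_mul_of_nonneg_right ?_ (by positivity)
        nlinarith
    _ = 3 * (A / (1 - t)) + 6 * u * (1 - t)⁻¹ := by
        rw [div_eq_mul_inv]; ring
    _ = 3 * (A / (1 - t)) + 6 / u := by rw [h6u]
    _ ≤ 6 * (A / (1 - t) + (d : ℝ) / u) := by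
        have h7 : 0 ≤ (d : ℝ) / u := by positivity
        calc 3 * (A / (1 - t)) + 6 / u ≤ 6 * (A / (1 - t)) + 6 * ((d : ℝ) / u) := by
              have := hdu
              linarith
          _ = 6 * (A / (1 - t) + (d : ℝ) / u) := by ring
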